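/- Let M be a real d×d matrix with eigenpair (α, v), where α ≠ 0 and v ∈ ℝ^d. Suppose λ ∈ ℝ satisfies λ² − (2+α)λ + 1 = 0 (so λ ≠ 1). Then the 2d-dimensional vector w = (v, v/(λ−1)) is an eigenvector with eigenvalue λ of the block matrix P = [[I + M, M],[I, I]]. -/

import Mathlib

/-- Let `M` be a real `d × d` matrix with eigenpair `(α, v)`, `α ≠ 0`, `v ≠ 0`.
If `λ ∈ ℝ` satisfies `λ² - (2+α)λ + 1 = 0` then `λ ≠ 1` and the vector
`w = (v, (λ-1)⁻¹ • v)` is an eigenvector with eigenvalue `λ` of the block map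
`P(x, y) = (x + M x + M y, x + y)`. -/
theorem block_matrix_eigenvector
    (d : ℕ) (M : Matrix (Fin d) (Fin d) ℝ) (v : Fin d → ℝ) (α l : ℝ)
    (hv : v ≠ 0) (hα : α ≠ 0) (hev : M.mulVec v = α • v)
    (hl : l ^ 2 - (2 + α) * l + 1 = 0) :
    l ≠ 1 ∧
      (v + M.mulVec v + M.mulVec ((l - 1)⁻¹ • v) = l • v ∧
        v + (l - 1)⁻¹ • v = l • ((l - 1)⁻¹ • v)) := by
  have hne : l ≠ 1 := by
    intro h
    subst h
    apply hα
    nlinarith [hl]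
  have h1 : l - 1 ≠ 0 := sub_ne_zero.mpr hne
  refine ⟨hne, ?_, ?_⟩
  · rw [Matrix.mulVec_smul, hev]
    match_scalars
    field_simp
    nlinarith [hl]
  · match_scalars
    field_simp
    ring
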